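/- Let H be a p-subgroup of a finite group G and N a normal subgroup of G containing H. If H satisfies the partial Π-property in G, then G has a chief series passing through N, say 1 = G*₀ < G*₁ < ⋯ < G*_r = N < ⋯ < G*ₙ = G, such that |G : N_G(HG*_{i-1} ∩ G*_i)| is a power of p for every i with 1 ≤ i ≤ n. -/

import Mathlib

open Subgroup

/-- `L/K` is a chief factor of `G`. -/
def IsChiefFactor (G : Type*) [Group G] (K L : Subgroup G) : Prop :=
  K.Normal ∧ L.Normal ∧ K < L ∧
    ∀ N : Subgroup G, N.Normal → K ≤ N → N ≤ L → N = K ∨ N = L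

/-- `σ` is a chief series of `G`. -/
def IsChiefSeries {G : Type*} [Group G] {n : ℕ} (σ : Fin (n + 1) → Subgroup G) : Prop :=
  σ 0 = ⊥ ∧ σ (Fin.last n) = ⊤ ∧
    ∀ i : Fin n, IsChiefFactor G (σ i.castSucc) (σ i.succ)

/-- `H` satisfies the partial Π-property in `G`: there is a chief series of `G` such that for
each chief factor `Gᵢ/Gᵢ₋₁`, the index `|G/Gᵢ₋₁ : N_{G/Gᵢ₋₁}(HGᵢ₋₁/Gᵢ₋₁ ∩ Gᵢ/Gᵢ₋₁)|`
(which equals `|G : N_G(HGᵢ₋₁ ∩ Gᵢ)|`) is a `π(HGᵢ₋₁/Gᵢ₋₁ ∩ Gᵢ/Gᵢ₋₁)`-number. -/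
def PartialPiProperty {G : Type*} [Group G] (H : Subgroup G) : Prop :=
  ∃ (n : ℕ) (σ : Fin (n + 1) → Subgroup G), IsChiefSeries σ ∧
    ∀ i : Fin n, ∀ q : ℕ, q.Prime →
      q ∣ (Subgroup.normalizer (((H ⊔ σ i.castSucc) ⊓ σ i.succ : Subgroup G) : Set G)).index →
      q ∣ (σ i.castSucc).relIndex ((H ⊔ σ i.castSucc) ⊓ σ i.succ)

/-- `G` is `p`-soluble: every chief factor is a `p`-group or a `p'`-group. -/
def IsPSoluble (p : ℕ) (G : Type*) [Group G] : Prop :=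
  ∀ K L : Subgroup G, IsChiefFactor G K L →
    (∃ k : ℕ, K.relIndex L = p ^ k) ∨ ¬ p ∣ K.relIndex L

/-- `G` has `p`-length at most one: there is a normal series `1 ≤ N ≤ M ≤ G` with `N` a
`p'`-group, `M/N` a `p`-group and `G/M` a `p'`-group. -/
def PLengthLEOne (p : ℕ) (G : Type*) [Group G] : Prop :=
  ∃ N M : Subgroup G, N.Normal ∧ M.Normal ∧ N ≤ M ∧
    ¬ p ∣ Nat.card N ∧ (∃ k : ℕ, N.relIndex M = p ^ k) ∧ ¬ p ∣ M.index


section AuxiliaryLemmas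

variable {G : Type*} [Group G]

private lemma exists_pow_eq' {p n : ℕ} (hn : n ≠ 0) (h : ∀ q : ℕ, q.Prime → q ∣ n → q = p) :
    ∃ k, n = p ^ k :=
  ⟨_, Nat.eq_prime_pow_of_unique_prime_dvd hn (fun hq hd => h _ hq hd)⟩

private lemma modular_law' {X K N : Subgroup G} (hK : K.Normal) (hXN : X ≤ N) :
    (X ⊔ K) ⊓ N = X ⊔ (K ⊓ N) := by
  haveI := hK
  apply le_antisymm
  · rintro g ⟨hg1, hg2⟩
    have hset : (g : G) ∈ (↑(X ⊔ K) : Set G) := hg1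
    rw [Subgroup.mul_normal] at hset
    obtain ⟨x, hx, k, hk, rfl⟩ := hset
    have hkN : k ∈ N := by
      have he : k = x⁻¹ * (x * k) := by group
      rw [he]; exact N.mul_mem (N.inv_mem (hXN hx)) hg2
    exact Subgroup.mul_mem _ (Subgroup.mem_sup_left hx)
      (Subgroup.mem_sup_right ⟨hk, hkN⟩)
  · exact le_inf (sup_le_sup_left inf_le_left _) (sup_le hXN inf_le_right)

private lemma normalizer_le_inf' {A : Subgroup G} (N : Subgroup G) (hN : N.Normal) :
    Subgroup.normalizer (A : Set G) ≤ Subgroup.normalizer ((A ⊓ N : Subgroup G) : Set G) := by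
  intro g hg
  rw [Subgroup.mem_normalizer_iff] at hg ⊢
  intro h
  simp only [SetLike.mem_coe, Subgroup.mem_inf]
  constructor
  · rintro ⟨h1, h2⟩
    exact ⟨(hg h).1 h1, hN.conj_mem h h2 g⟩
  · rintro ⟨h1, h2⟩
    refine ⟨(hg h).2 h1, ?_⟩
    have := hN.conj_mem _ h2 g⁻¹
    simpa [mul_assoc] using this

private lemma chief_inf' {K L N : Subgroup G} (hN : N.Normal)
    (hcf : IsChiefFactor G K L) :
    K ⊓ N = L ⊓ N ∨ IsChiefFactor G (K ⊓ N) (L ⊓ N) := by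
  obtain ⟨hKn, hLn, hKL, hmin⟩ := hcf
  haveI := hKn; haveI := hLn; haveI := hN
  rcases hmin (K ⊔ (L ⊓ N)) inferInstance le_sup_left
      (sup_le hKL.le inf_le_left) with hD | hD
  · left
    refine le_antisymm (inf_le_inf_right _ hKL.le) ?_
    exact le_inf (le_sup_right.trans hD.le) inf_le_right
  · right
    refine ⟨inferInstance, inferInstance, ?_, ?_⟩
    · refine lt_of_le_of_ne (inf_le_inf_right _ hKL.le) fun he => ?_
      have hLNK : L ⊓ N ≤ K := he ▸ inf_le_left
      have : K ⊔ (L ⊓ N) = K := sup_eq_left.2 hLNK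
      exact hKL.ne (this ▸ hD)
    · intro X hX hX1 hX2
      have hXN : X ≤ N := hX2.trans inf_le_right
      have hXL : X ≤ L := hX2.trans inf_le_left
      rcases hmin (K ⊔ X) inferInstance le_sup_left (sup_le hKL.le hXL) with hE | hE
      · left
        exact le_antisymm (le_inf (le_sup_right.trans hE.le) hXN) hX1
      · right
        refine le_antisymm hX2 ?_
        have : (X ⊔ K) ⊓ N = X ⊔ (K ⊓ N) := modular_law' hKn hXN
        rw [sup_comm X K, hE] at this
        rw [this]
        exact sup_le le_rfl hX1

private lemma chief_sup' {K L N : Subgroup G} (hN : N.Normal)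
    (hcf : IsChiefFactor G K L) :
    K ⊔ N = L ⊔ N ∨ IsChiefFactor G (K ⊔ N) (L ⊔ N) := by
  obtain ⟨hKn, hLn, hKL, hmin⟩ := hcf
  haveI := hKn; haveI := hLn; haveI := hN
  rcases hmin ((K ⊔ N) ⊓ L) inferInstance (le_inf le_sup_left hKL.le) inf_le_right with hD | hD
  · right
    refine ⟨inferInstance, inferInstance, ?_, ?_⟩
    · refine lt_of_le_of_ne (sup_le_sup_right hKL.le _) fun he => ?_
      have hLle : L ≤ K ⊔ N := he ▸ le_sup_left
      have : (K ⊔ N) ⊓ L = L := inf_eq_right.2 hLle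
      exact hKL.ne' (this ▸ hD)
    · intro X hX hX1 hX2
      rcases hmin (X ⊓ L) inferInstance (le_inf (le_sup_left.trans hX1) hKL.le)
          inf_le_right with hE | hE
      · left
        refine le_antisymm ?_ hX1
        have hNX : N ≤ X := le_sup_right.trans hX1
        have hmod : (N ⊔ L) ⊓ X = N ⊔ (L ⊓ X) := modular_law' hLn hNX
        have hXle : X ≤ N ⊔ L := hX2.trans (by rw [sup_comm])
        rw [inf_eq_right.2 hXle] at hmod
        rw [hmod, inf_comm L X, hE, sup_comm]
      · right
        have hLX : L ≤ X := by rw [← hE]; exact inf_le_left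
        exact le_antisymm hX2 (sup_le hLX (le_sup_right.trans hX1))
  · left
    have hLle : L ≤ K ⊔ N := by rw [← hD]; exact inf_le_left
    exact le_antisymm (sup_le_sup_right hKL.le _) (sup_le hLle le_sup_right)

private lemma Q_inf_step {p : ℕ} (hp : p.Prime) {H N K L : Subgroup G}
    (hN : N.Normal) (hK : K.Normal) (hHN : H ≤ N) {k : ℕ}
    (hk : (Subgroup.normalizer ((((H ⊔ K) ⊓ L : Subgroup G)) : Set G)).index = p ^ k) :
    ∃ j, (Subgroup.normalizer ((((H ⊔ (K ⊓ N)) ⊓ (L ⊓ N) : Subgroup G)) : Set G)).index = p ^ j := by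
  have hEq : (H ⊔ (K ⊓ N)) ⊓ (L ⊓ N) = ((H ⊔ K) ⊓ L) ⊓ N := by
    rw [← modular_law' hK hHN]
    ext g
    simp only [Subgroup.mem_inf]
    tauto
  rw [hEq]
  have hdvd := Subgroup.index_dvd_of_le (normalizer_le_inf' (A := (H ⊔ K) ⊓ L) N hN)
  rw [hk] at hdvd
  obtain ⟨j, _, hj⟩ := (Nat.dvd_prime_pow hp).1 hdvd
  exact ⟨j, hj⟩

private lemma Q_sup_step {p : ℕ} (hp : p.Prime) {H N K L : Subgroup G}
    (hN : N.Normal) (hK : K.Normal) (hHN : H ≤ N) (hKL : K ≤ L) :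
    ∃ j, (Subgroup.normalizer ((((H ⊔ (K ⊔ N)) ⊓ (L ⊔ N) : Subgroup G)) : Set G)).index = p ^ j := by
  have h4 : H ⊔ (K ⊔ N) = K ⊔ N := sup_eq_right.2 (hHN.trans le_sup_right)
  have h5 : (K ⊔ N) ⊓ (L ⊔ N) = K ⊔ N := inf_eq_left.2 (sup_le_sup_right hKL _)
  rw [h4, h5]
  haveI := hK
  haveI := hN
  refine ⟨0, ?_⟩
  rw [Subgroup.normalizer_eq_top_iff.2 inferInstance, Subgroup.index_top, pow_zero]

private lemma chain_dedup' (Q : Subgroup G → Subgroup G → Prop) :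
    ∀ m : ℕ, ∀ τ : Fin (m + 1) → Subgroup G, τ 0 = ⊥ → τ (Fin.last m) = ⊤ →
    (∀ i : Fin m, τ i.castSucc = τ i.succ ∨
      (IsChiefFactor G (τ i.castSucc) (τ i.succ) ∧ Q (τ i.castSucc) (τ i.succ))) →
    ∀ r : Fin (m + 1), ∃ (n : ℕ) (σ : Fin (n + 1) → Subgroup G) (r' : Fin (n + 1)),
      IsChiefSeries σ ∧ σ r' = τ r ∧ ∀ i : Fin n, Q (σ i.castSucc) (σ i.succ) := by
  intro m
  induction m with
  | zero =>
    intro τ h0 htop _ r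
    exact ⟨0, τ, r, ⟨h0, htop, fun i => i.elim0⟩, rfl, fun i => i.elim0⟩
  | succ m ih =>
    intro τ h0 htop hstep r
    by_cases hall : ∀ i : Fin (m + 1), τ i.castSucc ≠ τ i.succ
    · refine ⟨m + 1, τ, r, ⟨h0, htop, fun i => ?_⟩, rfl, fun i => ?_⟩
      · exact ((hstep i).resolve_left (hall i)).1
      · exact ((hstep i).resolve_left (hall i)).2
    · push_neg at hall
      obtain ⟨i, hi⟩ := hall
      -- helper for index juggling
      have key : ∀ (a b : ℕ) (ha : a < m + 2) (hb : b < m + 2), a = b →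
          τ ⟨a, ha⟩ = τ ⟨b, hb⟩ := by
        intro a b ha hb hab; subst hab; rfl
      have hil : i.val ≤ m := by omega
      have hi' : τ ⟨i.val, by omega⟩ = τ ⟨i.val + 1, by omega⟩ := by
        have h1 : i.castSucc = (⟨i.val, by omega⟩ : Fin (m + 2)) := by
          apply Fin.ext; simp
        have h2 : i.succ = (⟨i.val + 1, by omega⟩ : Fin (m + 2)) := by
          apply Fin.ext; simp
        rw [← h1, ← h2]; exact hi
      set τ' : Fin (m + 1) → Subgroup G :=
        fun j => τ ⟨if j.val < i.val then j.val else j.val + 1, by split <;> omega⟩ with hτ'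
      have hτc : ∀ (j : Fin (m + 1)) (v b : ℕ) (hb : b < m + 2), j.val = v →
          ((v < i.val ∧ b = v) ∨ (¬ v < i.val ∧ b = v + 1)) →
          τ' j = τ ⟨b, hb⟩ := by
        intro j v b hb hv hcase
        show τ ⟨if j.val < i.val then j.val else j.val + 1, by split <;> omega⟩ = τ ⟨b, hb⟩
        exact key _ _ _ _ (by split <;> omega)
      have h0' : τ' 0 = ⊥ := by
        by_cases hh : 0 < i.val
        · have e1 : τ' 0 = τ ⟨0, by omega⟩ :=
            hτc 0 0 0 (by omega) (by simp) (by omega)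
          have e2 : τ ⟨0, by omega⟩ = τ 0 := congrArg τ (Fin.ext (by simp))
          rw [e1, e2, h0]
        · have e1 : τ' 0 = τ ⟨i.val + 1, by omega⟩ :=
            hτc 0 0 (i.val + 1) (by omega) (by simp) (by omega)
          have e2 : τ ⟨i.val, by omega⟩ = τ 0 := congrArg τ (Fin.ext (by simp only [Fin.val_zero]; omega))
          rw [e1, ← hi', e2, h0]
      have htop' : τ' (Fin.last m) = ⊤ := by
        have e1 : τ' (Fin.last m) = τ ⟨m + 1, by omega⟩ :=
          hτc _ m (m + 1) (by omega) (by simp) (by omega)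
        have e2 : τ ⟨m + 1, by omega⟩ = τ (Fin.last (m + 1)) :=
          congrArg τ (Fin.ext (by simp))
        rw [e1, e2, htop]
      have hconv : ∀ (a : ℕ) (ha : a < m + 1), τ (Fin.castSucc ⟨a, ha⟩) = τ ⟨a, by omega⟩ ∧
          τ (Fin.succ ⟨a, ha⟩) = τ ⟨a + 1, by omega⟩ := by
        intro a ha
        constructor <;> exact congrArg τ (Fin.ext (by simp))
      have hstep' : ∀ j : Fin m, τ' j.castSucc = τ' j.succ ∨
          (IsChiefFactor G (τ' j.castSucc) (τ' j.succ) ∧ Q (τ' j.castSucc) (τ' j.succ)) := by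
        intro j
        rcases lt_trichotomy (j.val + 1) i.val with hc | hc | hc
        · have eL : τ' j.castSucc = τ ⟨j.val, by omega⟩ :=
            hτc _ j.val j.val (by omega) (by simp) (by omega)
          have eR : τ' j.succ = τ ⟨j.val + 1, by omega⟩ :=
            hτc _ (j.val + 1) (j.val + 1) (by omega) (by simp) (by omega)
          rw [eL, eR]
          have := hstep ⟨j.val, by omega⟩
          rwa [(hconv j.val (by omega)).1, (hconv j.val (by omega)).2] at this
        · have eL : τ' j.castSucc = τ ⟨j.val, by omega⟩ :=
            hτc _ j.val j.val (by omega) (by simp) (by omega)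
          have eR : τ' j.succ = τ ⟨j.val + 2, by omega⟩ :=
            hτc _ (j.val + 1) (j.val + 2) (by omega) (by simp) (by omega)
          have h2 : τ ⟨j.val + 2, by omega⟩ = τ ⟨j.val + 1, by omega⟩ :=
            (key _ (i.val + 1) _ (by omega) (by omega)).trans
              (hi'.symm.trans (key _ _ _ (by omega) (by omega)))
          rw [eL, eR, h2]
          have := hstep ⟨j.val, by omega⟩
          rwa [(hconv j.val (by omega)).1, (hconv j.val (by omega)).2] at this
        · have eL : τ' j.castSucc = τ ⟨j.val + 1, by omega⟩ :=
            hτc _ j.val (j.val + 1) (by omega) (by simp) (by omega)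
          have eR : τ' j.succ = τ ⟨j.val + 2, by omega⟩ :=
            hτc _ (j.val + 1) (j.val + 2) (by omega) (by simp) (by omega)
          rw [eL, eR]
          have := hstep ⟨j.val + 1, by omega⟩
          rwa [(hconv (j.val + 1) (by omega)).1, (hconv (j.val + 1) (by omega)).2] at this
      rcases le_or_gt r.val i.val with hr | hr
      · obtain ⟨n, σ, r'', hcs, heq, hQ⟩ := ih τ' h0' htop' hstep' ⟨r.val, by omega⟩
        refine ⟨n, σ, r'', hcs, ?_, hQ⟩
        rw [heq]
        by_cases hrr : r.val < i.val
        · have e1 : τ' ⟨r.val, by omega⟩ = τ ⟨r.val, by omega⟩ :=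
            hτc _ r.val r.val (by omega) rfl (by omega)
          have e2 : τ ⟨r.val, by omega⟩ = τ r := congrArg τ (Fin.ext rfl)
          rw [e1, e2]
        · have e1 : τ' ⟨r.val, by omega⟩ = τ ⟨i.val + 1, by omega⟩ :=
            hτc _ r.val (i.val + 1) (by omega) rfl (by omega)
          have e2 : τ ⟨i.val, by omega⟩ = τ r := congrArg τ (Fin.ext (by simp; omega))
          rw [e1, ← hi', e2]
      · obtain ⟨n, σ, r'', hcs, heq, hQ⟩ := ih τ' h0' htop' hstep' ⟨r.val - 1, by omega⟩
        refine ⟨n, σ, r'', hcs, ?_, hQ⟩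
        rw [heq]
        have e1 : τ' ⟨r.val - 1, by omega⟩ = τ ⟨r.val, by omega⟩ :=
          hτc _ (r.val - 1) r.val (by omega) rfl (by omega)
        have e2 : τ ⟨r.val, by omega⟩ = τ r := congrArg τ (Fin.ext rfl)
        rw [e1, e2]

end AuxiliaryLemmas

set_option maxHeartbeats 1000000

theorem stmt1 {p : ℕ} (hp : p.Prime) {G : Type*} [Group G] [Finite G]
    (H N : Subgroup G) (hHN : H ≤ N) (hN : N.Normal) (hpH : IsPGroup p H)
    (h : PartialPiProperty H) :
    ∃ (n : ℕ) (σ : Fin (n + 1) → Subgroup G) (r : Fin (n + 1)),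
      IsChiefSeries σ ∧ σ r = N ∧
      ∀ i : Fin n, ∃ k : ℕ,
        (Subgroup.normalizer (((H ⊔ σ i.castSucc) ⊓ σ i.succ : Subgroup G) : Set G)).index = p ^ k := by
  obtain ⟨n, σ, ⟨hσ0, hσtop, hσc⟩, hπ⟩ := h
  haveI : Fact p.Prime := ⟨hp⟩
  have skey : ∀ (a b : ℕ) (ha : a < n + 1) (hb : b < n + 1), a = b →
      σ ⟨a, ha⟩ = σ ⟨b, hb⟩ := by
    intro a b ha hb hab; subst hab; rfl
  -- Step A: each normalizer index in the original series is a power of p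
  have hQ0 : ∀ i : Fin n, ∃ k,
      (Subgroup.normalizer (((H ⊔ σ i.castSucc) ⊓ σ i.succ : Subgroup G) : Set G)).index = p ^ k := by
    intro i
    have hKn : (σ i.castSucc).Normal := (hσc i).1
    set K := σ i.castSucc with hKdef
    set L := σ i.succ with hLdef
    set M := (H ⊔ K) ⊓ L with hMdef
    have hrel : ∃ k, K.relIndex M = p ^ k := by
      set φ := (QuotientGroup.mk' K).comp M.subtype with hφ
      have hker : φ.ker = K.subgroupOf M := by
        rw [hφ, ← MonoidHom.comap_ker, QuotientGroup.ker_mk']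
        rfl
      have hrange : φ.range = M.map (QuotientGroup.mk' K) := by
        rw [hφ, MonoidHom.range_comp, Subgroup.range_subtype]
      have hmle : M.map (QuotientGroup.mk' K) ≤ H.map (QuotientGroup.mk' K) := by
        have h2 : K.map (QuotientGroup.mk' K) = ⊥ :=
          (Subgroup.map_eq_bot_iff K).2 (le_of_eq (QuotientGroup.ker_mk' K).symm)
        calc M.map (QuotientGroup.mk' K) ≤ (H ⊔ K).map (QuotientGroup.mk' K) :=
              Subgroup.map_mono inf_le_left
          _ = H.map (QuotientGroup.mk' K) ⊔ K.map (QuotientGroup.mk' K) :=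
              Subgroup.map_sup _ _ _
          _ = H.map (QuotientGroup.mk' K) := by rw [h2, sup_bot_eq]
      have hPG : IsPGroup p φ.range := by
        rw [hrange]; exact (hpH.map _).to_le hmle
      obtain ⟨k, hk⟩ := hPG.exists_card_eq
      refine ⟨k, ?_⟩
      have hcard : Nat.card (↥M ⧸ φ.ker) = Nat.card φ.range :=
        Nat.card_congr (QuotientGroup.quotientKerEquivRange φ).toEquiv
      rw [Subgroup.relIndex, Subgroup.index_eq_card, ← hker, hcard, hk]
    obtain ⟨k, hrelk⟩ := hrel
    apply exists_pow_eq' Subgroup.index_ne_zero_of_finite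
    intro q hq hdvd
    have hd2 := hπ i q hq hdvd
    rw [← hKdef, ← hLdef, ← hMdef, hrelk] at hd2
    exact (Nat.prime_dvd_prime_iff_eq hq hp).1 (hq.dvd_of_dvd_pow hd2)
  rcases Nat.eq_zero_or_pos n with hn | hn
  · subst hn
    have hbt : (⊥ : Subgroup G) = ⊤ := by rw [← hσ0, ← hσtop]; rfl
    have hNbot : N ≤ ⊥ := by rw [hbt]; exact le_top
    exact ⟨0, fun _ => ⊥, 0, ⟨rfl, hbt, fun i => i.elim0⟩,
      le_antisymm bot_le hNbot, fun i => i.elim0⟩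
  -- Build the chain of length 2n through N
  set τ : Fin (2 * n + 1) → Subgroup G :=
    fun j => if hj : j.val ≤ n then σ ⟨j.val, by omega⟩ ⊓ N
      else σ ⟨j.val - n, by omega⟩ ⊔ N with hτ
  have hτlow : ∀ (j : Fin (2 * n + 1)) (hv : j.val ≤ n),
      τ j = σ ⟨j.val, by omega⟩ ⊓ N := by
    intro j hv
    show (if hj : j.val ≤ n then σ ⟨j.val, by omega⟩ ⊓ N
      else σ ⟨j.val - n, by omega⟩ ⊔ N) = _
    rw [dif_pos hv]
  have hτhigh : ∀ (j : Fin (2 * n + 1)) (hv : ¬ j.val ≤ n),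
      τ j = σ ⟨j.val - n, by omega⟩ ⊔ N := by
    intro j hv
    show (if hj : j.val ≤ n then σ ⟨j.val, by omega⟩ ⊓ N
      else σ ⟨j.val - n, by omega⟩ ⊔ N) = _
    rw [dif_neg hv]
  have hσ0' : ∀ (h0 : (0:ℕ) < n + 1), σ ⟨0, h0⟩ = ⊥ := by
    intro h0; rw [← hσ0]; exact congrArg σ (Fin.ext (by simp))
  have hσtop' : ∀ (hnn : n < n + 1), σ ⟨n, hnn⟩ = ⊤ := by
    intro hnn; rw [← hσtop]; exact congrArg σ (Fin.ext (by simp))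
  have hτ0 : τ 0 = ⊥ := by
    rw [hτlow 0 (by simp)]
    have : σ ⟨(0 : Fin (2 * n + 1)).val, by simp only [Fin.val_zero]; omega⟩ = ⊥ := by
      rw [← hσ0]; exact congrArg σ (Fin.ext (by simp))
    rw [this, bot_inf_eq]
  have hτtop : τ (Fin.last (2 * n)) = ⊤ := by
    rw [hτhigh (Fin.last (2 * n)) (by simp [Fin.val_last]; omega)]
    have : σ ⟨(Fin.last (2 * n)).val - n, by omega⟩ = ⊤ := by
      rw [← hσtop]; exact congrArg σ (Fin.ext (by simp [Fin.val_last]; omega))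
    rw [this, top_sup_eq]
  have hτN : τ ⟨n, by omega⟩ = N := by
    rw [hτlow ⟨n, by omega⟩ (by simp)]
    rw [hσtop' (by omega), top_inf_eq]
  have hconv : ∀ (a : ℕ) (ha : a < n), σ (Fin.castSucc ⟨a, ha⟩) = σ ⟨a, by omega⟩ ∧
      σ (Fin.succ ⟨a, ha⟩) = σ ⟨a + 1, by omega⟩ := by
    intro a ha
    constructor <;> exact congrArg σ (Fin.ext (by simp))
  have hstep : ∀ i : Fin (2 * n), τ i.castSucc = τ i.succ ∨
      (IsChiefFactor G (τ i.castSucc) (τ i.succ) ∧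
        ∃ k : ℕ, (Subgroup.normalizer ((((H ⊔ τ i.castSucc) ⊓ τ i.succ : Subgroup G)) : Set G)).index = p ^ k) := by
    intro i
    by_cases hc : i.val + 1 ≤ n
    · -- lower part : intersections with N
      have eL : τ i.castSucc = σ ⟨i.val, by omega⟩ ⊓ N :=
        (hτlow i.castSucc (by simp only [Fin.coe_castSucc]; omega)).trans
          (congrArg (· ⊓ N) (skey _ _ _ (by omega) (by simp)))
      have eR : τ i.succ = σ ⟨i.val + 1, by omega⟩ ⊓ N :=
        (hτlow i.succ (by simp only [Fin.val_succ]; omega)).trans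
          (congrArg (· ⊓ N) (skey _ _ _ (by omega) (by simp)))
      have hcf : IsChiefFactor G (σ ⟨i.val, by omega⟩) (σ ⟨i.val + 1, by omega⟩) := by
        have := hσc ⟨i.val, by omega⟩
        rwa [(hconv i.val (by omega)).1, (hconv i.val (by omega)).2] at this
      rcases chief_inf' hN hcf with heq | hchief
      · left; rw [eL, eR]; exact heq
      · right
        refine ⟨by rw [eL, eR]; exact hchief, ?_⟩
        rw [eL, eR]
        obtain ⟨k, hk⟩ := hQ0 ⟨i.val, by omega⟩
        rw [(hconv i.val (by omega)).1, (hconv i.val (by omega)).2] at hk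
        exact Q_inf_step hp hN hcf.1 hHN hk
    · -- upper part : joins with N
      have eR : τ i.succ = σ ⟨i.val - n + 1, by omega⟩ ⊔ N :=
        (hτhigh i.succ (by simp only [Fin.val_succ]; omega)).trans
          (congrArg (· ⊔ N) (skey _ _ _ (by omega) (by simp only [Fin.val_succ]; omega)))
      have eL : τ i.castSucc = σ ⟨i.val - n, by omega⟩ ⊔ N := by
        rcases Nat.lt_or_ge n i.val with hgt | hge
        · exact (hτhigh i.castSucc (by simp only [Fin.coe_castSucc]; omega)).trans
            (congrArg (· ⊔ N) (skey _ _ _ (by omega) (by simp)))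
        · have hin : i.val = n := by omega
          rw [hτlow i.castSucc (by simp only [Fin.coe_castSucc]; omega)]
          have e1 : σ ⟨(i.castSucc).val, by simp only [Fin.coe_castSucc]; omega⟩ = ⊤ := by
            rw [← hσtop]; exact congrArg σ (Fin.ext (by simp [Fin.val_last]; omega))
          have e2 : σ ⟨i.val - n, by omega⟩ = ⊥ := by
            rw [← hσ0]; exact congrArg σ (Fin.ext (by simp; omega))
          rw [e1, top_inf_eq, e2, bot_sup_eq]
      have hcf : IsChiefFactor G (σ ⟨i.val - n, by omega⟩) (σ ⟨i.val - n + 1, by omega⟩) := by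
        have := hσc ⟨i.val - n, by omega⟩
        rwa [(hconv (i.val - n) (by omega)).1, (hconv (i.val - n) (by omega)).2] at this
      rcases chief_sup' hN hcf with heq | hchief
      · left; rw [eL, eR]; exact heq
      · right
        refine ⟨by rw [eL, eR]; exact hchief, ?_⟩
        rw [eL, eR]
        exact Q_sup_step hp hN hcf.1 hHN hcf.2.2.1.le
  obtain ⟨n', σ', r', hcs, heq, hQ'⟩ :=
    chain_dedup' (fun K' L' => ∃ k : ℕ, (Subgroup.normalizer ((((H ⊔ K') ⊓ L' : Subgroup G)) : Set G)).index = p ^ k)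
      (2 * n) τ hτ0 hτtop hstep ⟨n, by omega⟩
  exact ⟨n', σ', r', hcs, heq.trans hτN, hQ'⟩
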